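/- Let f : 𝕋² → ℝ² be measurable with ‖f‖_∞ < d and let a > 0. Suppose h : 𝕋² → ℝ is differentiable with h(x) > 0 for all x and |∇h(x) − f(x)/(2a)| ≤ d/(2a) for almost every x. Then the pair (h, u) with u ≡ 0 is a stationary weak solution of the Savage–Hutter system: ∂ₜh + div(hu) = 0 holds, and for a.e. x there exists b(x) in the closed unit ball of ℝ² such that ∇(a h²)(x) = h(x)(−d·b(x) + f(x)). -/

import Mathlib

open MeasureTheory Metric

/-- If `h > 0` is differentiable on the torus (modelled as a ℤ²-periodic
function on ℝ²) and `|∇h − f/(2a)| ≤ d/(2a)` a.e., with `‖f‖_∞ < d`, then `(h, u ≡ 0)`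
is a stationary weak solution of the Savage–Hutter system: the continuity equation
holds trivially and a.e. there is `b` in the closed unit ball with
`∇(a h²) = h (−d b + f)`. -/
theorem stationary_savage_hutter {a d : ℝ} (ha : 0 < a) (hd : 0 < d)
    (f : EuclideanSpace ℝ (Fin 2) → EuclideanSpace ℝ (Fin 2)) (hfmeas : Measurable f)
    (hfper : ∀ (x : EuclideanSpace ℝ (Fin 2)) (k : Fin 2 → ℤ),
      f (x + (EuclideanSpace.equiv (Fin 2) ℝ).symm fun i => (k i : ℝ)) = f x)
    (hfbound : ∃ C, C < d ∧ ∀ᵐ x ∂(volume : Measure (EuclideanSpace ℝ (Fin 2))), ‖f x‖ ≤ C)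
    (h : EuclideanSpace ℝ (Fin 2) → ℝ) (hhdiff : Differentiable ℝ h)
    (hhper : ∀ (x : EuclideanSpace ℝ (Fin 2)) (k : Fin 2 → ℤ),
      h (x + (EuclideanSpace.equiv (Fin 2) ℝ).symm fun i => (k i : ℝ)) = h x)
    (hpos : ∀ x, 0 < h x)
    (hgrad : ∀ᵐ x ∂(volume : Measure (EuclideanSpace ℝ (Fin 2))),
      ‖gradient h x - (2 * a)⁻¹ • f x‖ ≤ d / (2 * a)) :
    (∀ (t : ℝ) (x : EuclideanSpace ℝ (Fin 2)), HasDerivAt (fun _ : ℝ => h x) 0 t) ∧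
      ∀ᵐ x ∂(volume : Measure (EuclideanSpace ℝ (Fin 2))),
        ∃ b ∈ closedBall (0 : EuclideanSpace ℝ (Fin 2)) 1,
          gradient (fun y => a * h y ^ 2) x = h x • ((-d) • b + f x) := by
  have key : ∀ x, gradient (fun y => a * h y ^ 2) x = (2 * a * h x) • gradient h x := by
    intro x
    have h1 : HasGradientAt h (gradient h x) x := (hhdiff x).hasGradientAt
    have h2 : HasFDerivAt h
        (InnerProductSpace.toDual ℝ (EuclideanSpace ℝ (Fin 2)) (gradient h x)) x :=
      h1.hasFDerivAt
    have h3 : HasFDerivAt (fun y => a * h y ^ 2)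
        ((2 * a * h x) • InnerProductSpace.toDual ℝ (EuclideanSpace ℝ (Fin 2))
          (gradient h x)) x := by
      have := ((h2.mul h2).const_mul a)
      simp only [pow_two]
      refine this.congr_fderiv ?_
      set L := InnerProductSpace.toDual ℝ (EuclideanSpace ℝ (Fin 2)) (gradient h x)
      rw [smul_add]
      module
    have h4 : HasGradientAt (fun y => a * h y ^ 2)
        ((2 * a * h x) • gradient h x) x := by
      have := (hasFDerivAt_iff_hasGradientAt).mp h3
      rwa [_root_.map_smul, (InnerProductSpace.toDual ℝ
        (EuclideanSpace ℝ (Fin 2))).symm_apply_apply] at this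
    exact h4.gradient
  refine ⟨fun t x => hasDerivAt_const t (h x), ?_⟩
  filter_upwards [hgrad] with x hx
  refine ⟨d⁻¹ • (f x - (2 * a) • gradient h x), ?_, ?_⟩
  · rw [mem_closedBall, dist_zero_right, norm_smul, norm_inv, Real.norm_of_nonneg hd.le]
    have he : f x - (2 * a) • gradient h x
        = (-(2 * a)) • (gradient h x - (2 * a)⁻¹ • f x) := by
      rw [neg_smul, smul_sub, smul_smul, mul_inv_cancel₀ (by positivity : (2:ℝ)*a ≠ 0),
        one_smul]
      abel
    rw [he, norm_smul, Real.norm_eq_abs, abs_neg, abs_of_pos (by positivity : (0:ℝ) < 2*a)]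
    calc d⁻¹ * (2 * a * ‖gradient h x - (2 * a)⁻¹ • f x‖)
        ≤ d⁻¹ * (2 * a * (d / (2 * a))) := by
          apply mul_le_mul_of_nonneg_left _ (by positivity)
          exact mul_le_mul_of_nonneg_left hx (by positivity)
      _ = 1 := by field_simp
  · rw [key x, smul_smul]
    have hdd : (-d) * d⁻¹ = -1 := by field_simp
    rw [hdd]
    module
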